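/- arXiv:1311.3701 — 4 statements merged into one kernel-verified Lean document; each statement's English description precedes it below -/
import Mathlib

section
/- Let R be a commutative unital ring, G a topological space, Γ a group equipped with the discrete topology, and c : G → Γ a continuous map. Let A be the R-submodule of the R-module of all functions G → R consisting of the locally constant functions with compact support, and for each n ∈ Γ let A_n := {f ∈ A : supp(f) ⊆ c⁻¹(n)}. Then each A_n is an R-submodule of A, the family (A_n)_{n∈Γ} is independent (if a finite sum Σ f_n with f_n ∈ A_n for distinct indices n is zero, then every f_n is zero), and A is the internal direct sum ⨁_{n∈Γ} A_n; in particular every f ∈ A is a finite sum f = Σ_n f_n with f_n ∈ A_n. -/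
/-- Let `R` be a commutative unital ring, `G` a topological space,
`Γ` a group with the discrete topology and `c : G → Γ` continuous.  Let `A` be the set
of locally constant compactly supported functions `G → R` and, for `n ∈ Γ`, let
`A_n = {f ∈ A | supp f ⊆ c⁻¹(n)}`.  Then each `A_n` is an `R`-submodule of `A`
(contains `0`, closed under addition and scalar multiplication), the family `(A_n)` is
independent, and `A` is the internal direct sum of the `A_n`: every `f ∈ A` is a finite
sum of elements of the `A_n`. -/
theorem steinberg_grading_module
    {G Γ R : Type*} [TopologicalSpace G] [TopologicalSpace Γ] [DiscreteTopology Γ]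
    [Group Γ] [CommRing R] (c : G → Γ) (hc : Continuous c)
    (A : Set (G → R))
    (hA : A = {f | IsLocallyConstant f ∧ IsCompact (Function.support f)})
    (An : Γ → Set (G → R))
    (hAn : ∀ n, An n = {f ∈ A | Function.support f ⊆ c ⁻¹' {n}}) :
    (∀ n : Γ, An n ⊆ A ∧ (0 : G → R) ∈ An n ∧
      (∀ f g : G → R, f ∈ An n → g ∈ An n → f + g ∈ An n) ∧
      (∀ (t : R) (f : G → R), f ∈ An n → t • f ∈ An n)) ∧
    (∀ (S : Finset Γ) (f : Γ → (G → R)), (∀ n ∈ S, f n ∈ An n) →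
      (∑ n ∈ S, f n) = 0 → ∀ n ∈ S, f n = 0) ∧
    (∀ f ∈ A, ∃ (S : Finset Γ) (g : Γ → (G → R)),
      (∀ n ∈ S, g n ∈ An n) ∧ f = ∑ n ∈ S, g n) := by
  classical
  have hclosed : ∀ (f : G → R), IsLocallyConstant f → IsClosed (Function.support f) := by
    intro f hf
    have h : Function.support f = (f ⁻¹' {0})ᶜ := by
      ext x; simp [Function.mem_support]
    rw [h]
    exact (hf {0}).isClosed_compl
  refine ⟨?_, ?_, ?_⟩
  · intro n
    rw [hAn, hA]
    refine ⟨fun f hf => hf.1, ⟨⟨IsLocallyConstant.const 0, by simp⟩, by simp⟩, ?_, ?_⟩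
    · rintro f g ⟨⟨hf1, hf2⟩, hf3⟩ ⟨⟨hg1, hg2⟩, hg3⟩
      have hsub : Function.support (f + g) ⊆ Function.support f ∪ Function.support g :=
        Function.support_add f g
      exact ⟨⟨hf1.add hg1,
        (hf2.union hg2).of_isClosed_subset (hclosed _ (hf1.add hg1)) hsub⟩,
        hsub.trans (Set.union_subset hf3 hg3)⟩
    · rintro t f ⟨⟨hf1, hf2⟩, hf3⟩
      have hlc : IsLocallyConstant (t • f) := hf1.comp (fun r => t * r)
      have hsub : Function.support (t • f) ⊆ Function.support f := by
        intro x hx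
        simp only [Function.mem_support, Pi.smul_apply, smul_eq_mul] at hx ⊢
        exact fun h => hx (by rw [h, mul_zero])
      exact ⟨⟨hlc, hf2.of_isClosed_subset (hclosed _ hlc) hsub⟩, hsub.trans hf3⟩
  · intro S f hf hsum n hn
    funext x
    by_contra hx
    have hcx : c x = n := by
      have := (hAn n ▸ hf n hn).2 (by exact hx)
      simpa using this
    have hzero : ∀ m ∈ S, m ≠ n → f m x = 0 := by
      intro m hm hmn
      by_contra hmx
      have := (hAn m ▸ hf m hm).2 (by exact hmx)
      simp only [Set.mem_preimage, Set.mem_singleton_iff] at this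
      exact hmn (this.symm.trans hcx)
    have : (∑ m ∈ S, f m) x = f n x := by
      rw [Finset.sum_apply]
      exact Finset.sum_eq_single_of_mem n hn (fun m hm hmn => hzero m hm hmn)
    rw [hsum] at this
    exact hx this.symm
  · intro f hf
    rw [hA] at hf
    obtain ⟨hlc, hcs⟩ := hf
    have hfin : (c '' Function.support f).Finite := (hcs.image hc).finite_of_discrete
    refine ⟨hfin.toFinset, fun n x => if c x = n then f x else 0, ?_, ?_⟩
    · intro n _
      rw [hAn, hA]
      have hclc : IsLocallyConstant c := (IsLocallyConstant.iff_continuous c).mpr hc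
      have hg : IsLocallyConstant (fun x => if c x = n then f x else 0) :=
        (hclc.prodMk hlc).comp (fun p => if p.1 = n then p.2 else 0)
      have hsub : Function.support (fun x => if c x = n then f x else 0) ⊆
          Function.support f := by
        intro x hx
        simp only [Function.mem_support] at hx ⊢
        intro h; apply hx; simp [h]
      refine ⟨⟨hg, hcs.of_isClosed_subset (hclosed _ hg) hsub⟩, ?_⟩
      intro x hx
      simp only [Function.mem_support] at hx
      by_contra h
      simp only [Set.mem_preimage, Set.mem_singleton_iff] at h
      exact hx (if_neg h)
    · funext x
      rw [Finset.sum_apply]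
      simp only [Finset.sum_ite_eq, Set.Finite.mem_toFinset]
      by_cases hx : f x = 0
      · simp [hx]
      · rw [if_pos]
        exact ⟨x, Function.mem_support.mpr hx, rfl⟩
end

section
/- Let X be a topological space and let B be a collection of compact open subsets of X forming a basis for the topology of X. Suppose that for every nonempty finite subcollection G ⊆ B and every finite subcollection H ⊆ B, the set (⋂_{V∈G} V) \ (⋃_{W∈H} W) can be written as a finite union of pairwise disjoint elements of B. Then every compact open subset U of X can be written as a finite union of pairwise disjoint elements of B. -/
open Classical in
private lemma disjointify_aux {X : Type*} [TopologicalSpace X] (B : Set (Set X))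
    (hdiff : ∀ (G H : Finset (Set X)), ↑G ⊆ B → ↑H ⊆ B → G.Nonempty →
      ∃ P : Finset (Set X), ↑P ⊆ B ∧ (↑P : Set (Set X)).Pairwise Disjoint ∧
        (⋂ V ∈ G, V) \ (⋃ W ∈ H, W) = ⋃ V ∈ P, V) :
    ∀ G : Finset (Set X), ↑G ⊆ B →
      ∃ P : Finset (Set X), ↑P ⊆ B ∧ (↑P : Set (Set X)).Pairwise Disjoint ∧
        (⋃ V ∈ G, V) = ⋃ V ∈ P, V := by
  intro G
  induction G using Finset.induction_on with
  | empty => intro _; exact ⟨∅, by simp, by simp, by simp⟩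
  | @insert a G ha IH =>
    intro hGB
    have haB : a ∈ B := hGB (Finset.mem_insert_self a G)
    have hGB' : ↑G ⊆ B := fun x hx => hGB (Finset.mem_insert_of_mem hx)
    obtain ⟨Q, hQB, hQd, hQE⟩ := IH hGB'
    obtain ⟨P, hPB, hPd, hPE⟩ := hdiff {a} G (by simpa using haB) hGB'
      ⟨a, Finset.mem_singleton_self a⟩
    simp only [Finset.mem_singleton, Set.iInter_iInter_eq_left] at hPE
    refine ⟨P ∪ Q, ?_, ?_, ?_⟩
    · intro x hx
      rcases Finset.mem_union.mp (by exact_mod_cast hx) with h | h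
      · exact hPB h
      · exact hQB h
    · intro x hx y hy hxy
      have hx' := Finset.mem_union.mp (by exact_mod_cast hx)
      have hy' := Finset.mem_union.mp (by exact_mod_cast hy)
      have hPsub : ∀ z ∈ P, z ⊆ a \ ⋃ W ∈ G, W := by
        intro z hz
        rw [hPE]
        exact fun t ht => Set.mem_biUnion hz ht
      have hQsub : ∀ z ∈ Q, z ⊆ ⋃ W ∈ G, W := by
        intro z hz
        rw [hQE]
        exact fun t ht => Set.mem_biUnion hz ht
      rcases hx' with hxP | hxQ <;> rcases hy' with hyP | hyQ
      · exact hPd hxP hyP hxy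
      · exact Set.disjoint_of_subset (hPsub x hxP) (hQsub y hyQ)
          Set.disjoint_sdiff_left
      · exact (Set.disjoint_of_subset (hPsub y hyP) (hQsub x hxQ)
          Set.disjoint_sdiff_left).symm
      · exact hQd hxQ hyQ hxy
    · have h1 : (⋃ V ∈ insert a G, V) = a ∪ ⋃ V ∈ G, V := by
        simp [Finset.mem_insert, Set.iUnion_or, Set.iUnion_union_distrib]
      rw [h1, ← Set.diff_union_self, hPE, hQE, Finset.set_biUnion_union]

/-- Let `B` be a basis of compact open sets for a topological space
`X`.  Suppose that for every nonempty finite `G ⊆ B` and finite `H ⊆ B`, the set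
`(⋂_{V ∈ G} V) \ (⋃_{W ∈ H} W)` is a finite union of pairwise disjoint elements of `B`.
Then every compact open `U ⊆ X` is a finite union of pairwise disjoint elements
of `B`. -/
theorem compactOpen_eq_finite_disjoint_union_of_basis
    {X : Type*} [TopologicalSpace X] (B : Set (Set X))
    (hBco : ∀ V ∈ B, IsCompact V ∧ IsOpen V)
    (hBbasis : TopologicalSpace.IsTopologicalBasis B)
    (hdiff : ∀ (G H : Finset (Set X)), ↑G ⊆ B → ↑H ⊆ B → G.Nonempty →
      ∃ P : Finset (Set X), ↑P ⊆ B ∧ (↑P : Set (Set X)).Pairwise Disjoint ∧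
        (⋂ V ∈ G, V) \ (⋃ W ∈ H, W) = ⋃ V ∈ P, V)
    (U : Set X) (hUcomp : IsCompact U) (hUopen : IsOpen U) :
    ∃ P : Finset (Set X), ↑P ⊆ B ∧ (↑P : Set (Set X)).Pairwise Disjoint ∧
      U = ⋃ V ∈ P, V := by
  classical
  -- choose for each x ∈ U a basis element
  have hchoice : ∀ x : U, ∃ V, V ∈ B ∧ (x : X) ∈ V ∧ V ⊆ U := fun x =>
    hBbasis.exists_subset_of_mem_open x.2 hUopen
  choose v hvB hvmem hvsub using hchoice
  have hcover : U ⊆ ⋃ x : U, v x := fun x hx =>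
    Set.mem_iUnion.mpr ⟨⟨x, hx⟩, hvmem ⟨x, hx⟩⟩
  obtain ⟨t, ht⟩ := hUcomp.elim_finite_subcover v
    (fun x => (hBco _ (hvB x)).2) hcover
  set G : Finset (Set X) := t.image v with hG
  have hGB : ↑G ⊆ B := by
    intro W hW
    simp only [hG, Finset.coe_image, Set.mem_image] at hW
    obtain ⟨x, _, rfl⟩ := hW
    exact hvB x
  have hGU : (⋃ V ∈ G, V) = U := by
    apply Set.Subset.antisymm
    · intro y hy
      simp only [hG, Set.mem_iUnion] at hy
      obtain ⟨W, hW, hyW⟩ := hy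
      obtain ⟨x, _, rfl⟩ := Finset.mem_image.mp hW
      exact hvsub x hyW
    · intro y hy
      obtain ⟨s, hs, hys⟩ := Set.mem_iUnion₂.mp (ht hy)
      exact Set.mem_iUnion₂.mpr ⟨v s, Finset.mem_image_of_mem v hs, hys⟩
  obtain ⟨P, hPB, hPd, hPE⟩ := disjointify_aux B hdiff G hGB
  exact ⟨P, hPB, hPd, by rw [← hGU, hPE]⟩
end

section
/- Let Z and Y be topological spaces with Y Hausdorff, let r : Z → Y be a continuous open map, and let U_1, …, U_n be compact open subsets of Z. Define V_1 := U_1 and, recursively, V_i := U_i \ r⁻¹(r(U_1) ∪ ⋯ ∪ r(U_{i−1})) for 2 ≤ i ≤ n. Then each V_i is a compact open subset of Z, the images r(V_1), …, r(V_n) are pairwise disjoint, and ⋃_{i=1}^n r(V_i) = ⋃_{i=1}^n r(U_i). -/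
/-- Let `r : Z → Y` be a continuous open map into a Hausdorff space
and `U 0, …, U (n-1)` compact open subsets of `Z`.  Define `V 0 = U 0` and
`V i = U i \ r⁻¹(r(U 0) ∪ ⋯ ∪ r(U (i-1)))`.  Then each `V i` is compact open, the
images `r '' V i` are pairwise disjoint, and `⋃ i, r '' V i = ⋃ i, r '' U i`. -/
theorem disjointification_of_images
    {Z Y : Type*} [TopologicalSpace Z] [TopologicalSpace Y] [T2Space Y]
    (r : Z → Y) (hrc : Continuous r) (hro : IsOpenMap r)
    (n : ℕ) (U : Fin n → Set Z)
    (hUcomp : ∀ i, IsCompact (U i)) (hUopen : ∀ i, IsOpen (U i))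
    (V : Fin n → Set Z)
    (hV : ∀ i, V i = U i \ r ⁻¹' (⋃ j : Fin n, ⋃ _ : j < i, r '' U j)) :
    (∀ i, IsCompact (V i) ∧ IsOpen (V i)) ∧
    (Pairwise fun i j => Disjoint (r '' V i) (r '' V j)) ∧
    (⋃ i, r '' V i) = ⋃ i, r '' U i := by
  classical
  have hopen : ∀ i, IsOpen (r '' U i) := fun i => hro _ (hUopen i)
  have hclosed : ∀ i, IsClosed (r '' U i) := fun i => ((hUcomp i).image hrc).isClosed
  have hWopen : ∀ i : Fin n, IsOpen (r ⁻¹' (⋃ j : Fin n, ⋃ _ : j < i, r '' U j)) := by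
    intro i
    exact (isOpen_iUnion fun j => isOpen_iUnion fun _ => hopen j).preimage hrc
  have hWclosed : ∀ i : Fin n, IsClosed (r ⁻¹' (⋃ j : Fin n, ⋃ _ : j < i, r '' U j)) := by
    intro i
    exact (isClosed_iUnion_of_finite fun j =>
      isClosed_iUnion_of_finite fun _ => hclosed j).preimage hrc
  have hdisj : ∀ i j : Fin n, i < j → Disjoint (r '' V i) (r '' V j) := by
    intro i j hij
    rw [Set.disjoint_left]
    rintro y ⟨x, hx, rfl⟩ ⟨x', hx', hx'e⟩
    rw [hV j] at hx'
    apply hx'.2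
    rw [Set.mem_preimage, hx'e]
    exact Set.mem_iUnion.2 ⟨i, Set.mem_iUnion.2 ⟨hij, ⟨x, (hV i ▸ hx).1, rfl⟩⟩⟩
  refine ⟨fun i => ⟨?_, ?_⟩, ?_, ?_⟩
  · rw [hV i, Set.diff_eq]
    exact (hUcomp i).inter_right (hWopen i).isClosed_compl
  · rw [hV i]
    exact (hUopen i).sdiff (hWclosed i)
  · intro i j hij
    rcases lt_or_gt_of_ne hij with h | h
    · exact hdisj i j h
    · exact (hdisj j i h).symm
  · apply Set.Subset.antisymm
    · exact Set.iUnion_mono fun i => Set.image_mono (f := r) (by rw [hV i]; exact Set.diff_subset)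
    · rintro y hy
      have hex : ∃ k : ℕ, ∃ hk : k < n, y ∈ r '' U ⟨k, hk⟩ := by
        rcases Set.mem_iUnion.1 hy with ⟨i, hi⟩
        exact ⟨i.1, i.2, by simpa using hi⟩
      set k := Nat.find hex with hkdef
      obtain ⟨hk, hky⟩ := Nat.find_spec hex
      have hmin : ∀ m < k, ∀ hm : m < n, y ∉ r '' U ⟨m, hm⟩ := by
        intro m hm hmn hmem
        exact Nat.find_min hex (hkdef ▸ hm) ⟨hmn, hmem⟩
      obtain ⟨x, hx, rfl⟩ := hky
      refine Set.mem_iUnion.2 ⟨⟨k, hk⟩, ⟨x, ?_, rfl⟩⟩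
      rw [hV ⟨k, hk⟩]
      refine ⟨hx, ?_⟩
      intro hmem
      rcases Set.mem_iUnion.1 hmem with ⟨j, hj⟩
      rcases Set.mem_iUnion.1 hj with ⟨hjk, hjmem⟩
      exact hmin j.1 hjk j.2 hjmem
end

section
/- Let E be a directed graph, let F⁰ ⊆ E⁰ be a set of vertices, and set T⁰ := E⁰ \ F⁰. Assume that for every infinite path y ∈ E^∞ with r_E(y) ∈ T⁰ and s_E(y_i) ∈ T⁰ for all i ≥ 1, there exists a finite path μ with r_E(μ) ∈ F⁰ and s_E(μ) = r_E(y). Then for every infinite path x ∈ E^∞ there exist n ∈ ℕ and a finite path μ (possibly a vertex) with r_E(μ) ∈ F⁰ and s_E(μ) = r_E(σⁿ(x)). -/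
/-- A finite path in a directed graph with vertex set `V`, edge set `E` and range and
source maps `r s : E → V`.  A path is a (possibly empty) list of composable edges
together with its range vertex; a path with no edges is a vertex. -/
structure GraphPath (V E : Type*) (r s : E → V) where
  /-- the range vertex of the path -/
  vertex : V
  /-- the list of edges `μ₁μ₂⋯μₙ` of the path -/
  edges : List E
  head_eq : ∀ e ∈ edges.head?, r e = vertex
  chain : edges.Chain' fun e f => s e = r f

namespace GraphPath

variable {V E : Type*} {r s : E → V}

/-- The range `r_E(μ)` of a finite path. -/
def rng (p : GraphPath V E r s) : V := p.vertex

/-- The source `s_E(μ)` of a finite path. -/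
def src (p : GraphPath V E r s) : V := (p.edges.getLast?.map s).getD p.vertex

end GraphPath

/-- Let `F⁰ ⊆ E⁰` and `T⁰ := E⁰ \ F⁰`.  Assume that for every
infinite path `y` with `r_E(y) ∈ T⁰` and `s_E(yᵢ) ∈ T⁰` for all `i`, there is a finite
path `μ` with `r_E(μ) ∈ F⁰` and `s_E(μ) = r_E(y)`.  Then for every infinite path `x`
there are `n ∈ ℕ` and a finite path `μ` (possibly a vertex) with `r_E(μ) ∈ F⁰` and
`s_E(μ) = r_E(σⁿ(x))`.  Infinite paths are encoded as sequences `x : ℕ → E` with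
`s(xᵢ) = r(xᵢ₊₁)`, so that `r_E(σⁿ(x)) = r (x n)`. -/
theorem orbit_meets_F0
    {V E : Type*} (r s : E → V) (F0 : Set V)
    (hT2 : ∀ y : ℕ → E, (∀ i, s (y i) = r (y (i + 1))) →
      r (y 0) ∉ F0 → (∀ i, s (y i) ∉ F0) →
      ∃ μ : GraphPath V E r s, μ.rng ∈ F0 ∧ μ.src = r (y 0)) :
    ∀ x : ℕ → E, (∀ i, s (x i) = r (x (i + 1))) →
      ∃ (n : ℕ) (μ : GraphPath V E r s), μ.rng ∈ F0 ∧ μ.src = r (x n) := by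
  intro x hx
  have triv : ∀ v : V, v ∈ F0 → ∃ μ : GraphPath V E r s, μ.rng ∈ F0 ∧ μ.src = v := by
    intro v hv
    exact ⟨⟨v, [], by simp, by constructor⟩, hv, rfl⟩
  by_cases h0 : r (x 0) ∈ F0
  · exact ⟨0, triv _ h0⟩
  by_cases hs : ∀ i, s (x i) ∉ F0
  · obtain ⟨μ, hμ⟩ := hT2 x hx h0 hs
    exact ⟨0, μ, hμ⟩
  · push_neg at hs
    obtain ⟨i, hi⟩ := hs
    rw [hx i] at hi
    exact ⟨i + 1, triv _ hi⟩
end
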